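/- Let n ≥ 1, let g : ℝ → ℝ and f : ℝ → ℝ be n times continuously differentiable. Then for every x ∈ ℝ, the n-th derivative of f ∘ g at x equals Σ_{k=1}^{n} f^{(k)}(g(x)) · B^g_{n,k}(x) (Faà di Bruno's formula in partial Bell polynomial form). -/

import Mathlib

/-- The univariate partial Bell polynomial `B_{n,k}(x_1, …, x_{n-k+1})`:
the sum over all sequences `j_1, …, j_{n-k+1}` of nonnegative integers with
`j_1 + … + j_{n-k+1} = k` and `j_1 + 2 j_2 + … + (n-k+1) j_{n-k+1} = n` of
`n!/(j_1! ⋯ j_{n-k+1}!) ∏_i (x_i / i!)^{j_i}`. -/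
noncomputable def bellPoly (n k : ℕ) (x : ℕ → ℝ) : ℝ :=
  ∑ j ∈ (Fintype.piFinset fun _ : Fin (n - k + 1) => Finset.range (n + 1)).filter
      (fun j => (∑ i, j i) = k ∧ (∑ i, (i.1 + 1) * j i) = n),
    ((n.factorial : ℝ) / ∏ i, ((j i).factorial : ℝ)) *
      ∏ i, (x (i.1 + 1) / ((i.1 + 1).factorial : ℝ)) ^ j i

namespace FdB
open Finset

def Eset (n k N R : ℕ) : Finset (Fin N → ℕ) :=
  (Fintype.piFinset fun _ : Fin N => Finset.range R).filter
      (fun j => (∑ i, j i) = k ∧ (∑ i, (i.1 + 1) * j i) = n)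

noncomputable def term (n N : ℕ) (x : ℕ → ℝ) (j : Fin N → ℕ) : ℝ :=
  ((n.factorial : ℝ) / ∏ i, ((j i).factorial : ℝ)) *
      ∏ i, (x (i.1 + 1) / ((i.1 + 1).factorial : ℝ)) ^ j i

noncomputable def Bv (n k N R : ℕ) (x : ℕ → ℝ) : ℝ := ∑ j ∈ Eset n k N R, term n N x j

lemma bellPoly_eq_Bv' (n k : ℕ) (x : ℕ → ℝ) : bellPoly n k x = Bv n k (n - k + 1) (n + 1) x := rfl

lemma mem_Eset {n k N R : ℕ} {j : Fin N → ℕ} (h : j ∈ Eset n k N R) :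
    (∀ i, j i < R) ∧ (∑ i, j i) = k ∧ (∑ i, (i.1 + 1) * j i) = n := by
  rw [Eset, mem_filter, Fintype.mem_piFinset] at h
  exact ⟨fun i => mem_range.1 (h.1 i), h.2⟩

lemma mem_Eset_of {n k N R : ℕ} {j : Fin N → ℕ} (h1 : ∀ i, j i < R)
    (h2 : (∑ i, j i) = k) (h3 : (∑ i, (i.1 + 1) * j i) = n) : j ∈ Eset n k N R := by
  rw [Eset, mem_filter, Fintype.mem_piFinset]
  exact ⟨fun i => mem_range.2 (h1 i), h2, h3⟩

lemma k_le_n {n k N R : ℕ} {j : Fin N → ℕ} (h : j ∈ Eset n k N R) : k ≤ n := by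
  obtain ⟨-, h2, h3⟩ := mem_Eset h
  rw [← h2, ← h3]
  exact Finset.sum_le_sum fun i _ => Nat.le_mul_of_pos_left _ (Nat.succ_pos _)

lemma weight_le {n k N R : ℕ} {j : Fin N → ℕ} (h : j ∈ Eset n k N R) (i : Fin N) :
    (i.1 + 1) * j i ≤ n := by
  obtain ⟨-, -, h3⟩ := mem_Eset h
  rw [← h3]
  exact Finset.single_le_sum (f := fun m : Fin N => (m.1 + 1) * j m) (fun m _ => Nat.zero_le _) (mem_univ i)

lemma zero_of_ge {n k N R : ℕ} {j : Fin N → ℕ} (h : j ∈ Eset n k N R) {i : Fin N}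
    (hi : n - k + 1 ≤ i.1) : j i = 0 := by
  by_contra hne
  have hk := k_le_n h
  obtain ⟨-, h2, h3⟩ := mem_Eset h
  have hsplit : ∑ m : Fin N, (m.1 + 1) * j m = (∑ m : Fin N, j m) + ∑ m : Fin N, m.1 * j m := by
    rw [← Finset.sum_add_distrib]; exact Finset.sum_congr rfl fun m _ => by ring
  have h4 : i.1 * j i ≤ ∑ m : Fin N, m.1 * j m :=
    Finset.single_le_sum (f := fun m : Fin N => m.1 * j m) (fun m _ => Nat.zero_le _) (mem_univ i)
  have : i.1 ≤ i.1 * j i := Nat.le_mul_of_pos_right _ (Nat.pos_of_ne_zero hne)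
  omega

/-- padding a function by zeros -/
def pad (N M : ℕ) (j : Fin N → ℕ) : Fin M → ℕ := fun i => if h : i.1 < N then j ⟨i.1, h⟩ else 0

lemma prod_pad {M₀ : Type*} [CommMonoid M₀] {a b : ℕ} (hab : a ≤ b) (j : Fin a → ℕ)
    (F : ℕ → ℕ → M₀) (hF : ∀ i, F i 0 = 1) :
    (∏ i : Fin b, F i.1 (pad a b j i)) = ∏ i : Fin a, F i.1 (j i) := by
  have e1 : (∏ i : Fin b, F i.1 (pad a b j i))
      = ∏ i ∈ Finset.range b, F i (if h : i < a then j ⟨i, h⟩ else 0) := by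
    rw [Finset.prod_range fun i => F i (if h : i < a then j ⟨i, h⟩ else 0)]
    exact Finset.prod_congr rfl fun i _ => rfl
  rw [e1, ← Finset.prod_subset (Finset.range_subset_range.2 hab)
    (by intro i _ hi; rw [dif_neg (by simpa using hi), hF])]
  rw [Finset.prod_range fun i => F i (if h : i < a then j ⟨i, h⟩ else 0)]
  exact Finset.prod_congr rfl fun i _ => by rw [dif_pos i.2]

lemma sum_pad {a b : ℕ} (hab : a ≤ b) (j : Fin a → ℕ) (F : ℕ → ℕ → ℕ) (hF : ∀ i, F i 0 = 0) :
    (∑ i : Fin b, F i.1 (pad a b j i)) = ∑ i : Fin a, F i.1 (j i) :=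
  prod_pad (M₀ := Multiplicative ℕ) hab j F hF


lemma val_le_k {n k N R : ℕ} {j : Fin N → ℕ} (h : j ∈ Eset n k N R) (i : Fin N) : j i ≤ k := by
  obtain ⟨-, h2, -⟩ := mem_Eset h
  rw [← h2]
  exact Finset.single_le_sum (f := fun m : Fin N => j m) (fun m _ => Nat.zero_le _) (mem_univ i)

lemma pad_restrict {n k N M R' : ℕ} (hN : n - k + 1 ≤ N) (hNM : N ≤ M) {j' : Fin M → ℕ}
    (h : j' ∈ Eset n k M R') :
    pad N M (fun i : Fin N => j' ⟨i.1, lt_of_lt_of_le i.2 hNM⟩) = j' := by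
  funext i
  unfold pad
  by_cases hi : i.1 < N
  · simp only [dif_pos hi]
  · rw [dif_neg hi]
    exact (zero_of_ge h (by omega)).symm

lemma Bv_pad_le {n k N M R R' : ℕ} (hN : n - k + 1 ≤ N) (hNM : N ≤ M) (hR : n < R)
    (hR' : n < R') (x : ℕ → ℝ) : Bv n k N R x = Bv n k M R' x := by
  unfold Bv
  refine Finset.sum_bij' (fun j _ => pad N M j)
    (fun j' _ => fun i : Fin N => j' ⟨i.1, lt_of_lt_of_le i.2 hNM⟩) ?_ ?_ ?_ ?_ ?_
  · intro j hj
    obtain ⟨-, h2, h3⟩ := mem_Eset hj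
    have hkn := k_le_n hj
    refine mem_Eset_of (fun i => ?_) ?_ ?_
    · dsimp only [pad]
      by_cases hi : i.1 < N
      · rw [dif_pos hi]
        have := val_le_k hj ⟨i.1, hi⟩
        omega
      · rw [dif_neg hi]; omega
    · rw [sum_pad hNM j (fun _ c => c) (fun _ => rfl)]; exact h2
    · rw [sum_pad hNM j (fun i c => (i + 1) * c) (fun _ => Nat.mul_zero _)]; exact h3
  · intro j' hj'
    obtain ⟨-, h2, h3⟩ := mem_Eset hj'
    have hkn := k_le_n hj'
    have hp := pad_restrict hN hNM hj'
    beta_reduce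
    refine mem_Eset_of (fun i => ?_) ?_ ?_
    · have := val_le_k hj' ⟨i.1, lt_of_lt_of_le i.2 hNM⟩
      omega
    · have e := sum_pad hNM (fun i : Fin N => j' ⟨i.1, lt_of_lt_of_le i.2 hNM⟩)
        (fun _ c => c) (fun _ => rfl)
      rw [hp] at e
      rw [← e]; exact h2
    · have e := sum_pad hNM (fun i : Fin N => j' ⟨i.1, lt_of_lt_of_le i.2 hNM⟩)
        (fun i c => (i + 1) * c) (fun _ => Nat.mul_zero _)
      rw [hp] at e
      rw [← e]; exact h3
  · intro j _
    funext i
    show (if h : i.1 < N then j ⟨i.1, h⟩ else 0) = j i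
    simp only [dif_pos i.2]
  · intro j' hj'
    exact pad_restrict hN hNM hj'
  · intro j _
    unfold term
    rw [prod_pad hNM j (fun _ c => (c.factorial : ℝ)) (fun _ => by simp),
      prod_pad hNM j (fun m c => (x (m + 1) / ((m + 1).factorial : ℝ)) ^ c)
        (fun _ => pow_zero _)]

lemma Bv_pad {n k N M R R' : ℕ} (hN : n - k + 1 ≤ N) (hM : n - k + 1 ≤ M) (hR : n < R)
    (hR' : n < R') (x : ℕ → ℝ) : Bv n k N R x = Bv n k M R' x := by
  rcases le_total N M with h | h
  · exact Bv_pad_le hN h hR hR' x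
  · exact (Bv_pad_le hM h hR' hR x).symm

lemma bellPoly_eq_Bv (n k : ℕ) (x : ℕ → ℝ) : bellPoly n k x = Bv n k (n + 2) (n + 2) x :=
  (bellPoly_eq_Bv' n k x).trans (Bv_pad le_rfl (by omega) (by omega) (by omega) x)

lemma Bv_eq_zero_of_lt {n k N R : ℕ} (h : n < k) (x : ℕ → ℝ) : Bv n k N R x = 0 := by
  unfold Bv
  rw [Finset.sum_eq_zero]
  intro j hj
  exact absurd (k_le_n hj) (by omega)

lemma Bv_zero_eq_zero {n N R : ℕ} (hn : 1 ≤ n) (x : ℕ → ℝ) : Bv n 0 N R x = 0 := by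
  unfold Bv
  rw [Finset.sum_eq_zero]
  intro j hj
  obtain ⟨-, h2, h3⟩ := mem_Eset hj
  have : ∀ i, j i = 0 := fun i => Nat.le_zero.1 (val_le_k hj i)
  rw [Finset.sum_eq_zero (fun i _ => by rw [this i, Nat.mul_zero])] at h3
  omega

section Helpers
variable {α : Type*} {M : Type*} [Fintype α] [DecidableEq α]

lemma update_comp {β γ : Type*} (G : α → β → γ) (j : α → β) (a : α) (v : β) :
    (fun m => G m (Function.update j a v m)) = Function.update (fun m => G m (j m)) a (G a v) := by
  funext m
  rcases eq_or_ne m a with rfl | h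
  · simp
  · simp [Function.update_of_ne h]

lemma prod_update_comp [CommMonoid M] (G : α → ℕ → M) (j : α → ℕ) (a : α) (v : ℕ) :
    (∏ m, G m (Function.update j a v m)) * G a (j a) = (∏ m, G m (j m)) * G a v := by
  rw [update_comp, Finset.prod_update_of_mem (Finset.mem_univ a),
    Finset.prod_eq_mul_prod_sdiff_singleton_of_mem (Finset.mem_univ a) (fun m => G m (j m))]
  ac_rfl

lemma sum_update_comp (G : α → ℕ → ℕ) (j : α → ℕ) (a : α) (v : ℕ) :
    (∑ m, G m (Function.update j a v m)) + G a (j a) = (∑ m, G m (j m)) + G a v :=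
  prod_update_comp (M := Multiplicative ℕ) G j a v

lemma prod_update2 [CommMonoid M] (G : α → ℕ → M) (j : α → ℕ) {a b : α} (hab : a ≠ b)
    (va vb : ℕ) :
    (∏ m, G m (Function.update (Function.update j a va) b vb m)) * (G a (j a) * G b (j b))
      = (∏ m, G m (j m)) * (G a va * G b vb) := by
  have e1 : Function.update j a va b = j b := Function.update_of_ne hab.symm _ _
  have h1 := prod_update_comp G (Function.update j a va) b vb
  rw [e1] at h1
  have h2 := prod_update_comp G j a va
  calc (∏ m, G m (Function.update (Function.update j a va) b vb m)) * (G a (j a) * G b (j b))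
      = ((∏ m, G m (Function.update (Function.update j a va) b vb m)) * G b (j b)) * G a (j a) :=
        by ac_rfl
    _ = ((∏ m, G m (Function.update j a va m)) * G b vb) * G a (j a) := by rw [h1]
    _ = ((∏ m, G m (Function.update j a va m)) * G a (j a)) * G b vb := by ac_rfl
    _ = ((∏ m, G m (j m)) * G a va) * G b vb := by rw [h2]
    _ = (∏ m, G m (j m)) * (G a va * G b vb) := by rw [mul_assoc]

lemma sum_update2 (G : α → ℕ → ℕ) (j : α → ℕ) {a b : α} (hab : a ≠ b) (va vb : ℕ) :
    (∑ m, G m (Function.update (Function.update j a va) b vb m)) + (G a (j a) + G b (j b))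
      = (∑ m, G m (j m)) + (G a va + G b vb) :=
  prod_update2 (M := Multiplicative ℕ) G j hab va vb

lemma pair_le_sum (j : α → ℕ) {a b : α} (hab : a ≠ b) : j a + j b ≤ ∑ m, j m := by
  rw [← Finset.add_sum_erase _ j (Finset.mem_univ a)]
  exact Nat.add_le_add_left
    (Finset.single_le_sum (f := j) (fun m _ => Nat.zero_le _)
      (Finset.mem_erase.2 ⟨hab.symm, Finset.mem_univ b⟩)) _

end Helpers

/-- The derivative of `Bv n k` along the derivatives of `g`, as a formal expression. -/
noncomputable def DB (n k : ℕ) (y : ℕ → ℝ) : ℝ :=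
  ∑ j ∈ Eset n k (n + 2) (n + 2),
    ((n.factorial : ℝ) / ∏ i, ((j i).factorial : ℝ)) *
      ∑ i : Fin (n + 2),
        (∏ m ∈ Finset.univ.erase i, (y (m.1 + 1) / ((m.1 + 1).factorial : ℝ)) ^ j m) *
          ((j i : ℝ) * (y (i.1 + 1) / ((i.1 + 1).factorial : ℝ)) ^ (j i - 1) *
            ((i.1 + 2) * (y (i.1 + 2) / ((i.1 + 2).factorial : ℝ))))

lemma step2 (n k : ℕ) (hk : 1 ≤ k) (y : ℕ → ℝ) :
    (∑ j' ∈ Eset (n + 1) k (n + 2) (n + 2),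
      ((n.factorial : ℝ) / ∏ i, ((j' i).factorial : ℝ)) * (j' 0 : ℝ)
        * ∏ i, (y (i.1 + 1) / ((i.1 + 1).factorial : ℝ)) ^ j' i)
    = y 1 * Bv n (k - 1) (n + 2) (n + 2) y := by
  rw [Bv, Finset.mul_sum,
    ← Finset.sum_filter_of_ne (p := fun j' : Fin (n + 2) → ℕ => j' 0 ≠ 0)
      (fun x _ hx h0 => hx (by rw [h0]; push_cast; ring))]
  refine Finset.sum_bij' (fun j' _ => Function.update j' 0 (j' 0 - 1))
    (fun j _ => Function.update j 0 (j 0 + 1)) ?_ ?_ ?_ ?_ ?_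
  · intro j' hj'
    beta_reduce
    obtain ⟨hjE, h0⟩ := Finset.mem_filter.1 hj'
    obtain ⟨h1, h2, h3⟩ := mem_Eset hjE
    refine mem_Eset_of (fun m => ?_) ?_ ?_
    · rcases eq_or_ne m 0 with rfl | hm
      · rw [Function.update_self]; have := h1 (0 : Fin (n + 2)); omega
      · rw [Function.update_of_ne hm]; exact h1 m
    · have := sum_update_comp (fun (_ : Fin (n + 2)) c => c) j' 0 (j' 0 - 1)
      omega
    · have := sum_update_comp (fun (m : Fin (n + 2)) c => (m.1 + 1) * c) j' 0 (j' 0 - 1)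
      simp only [Fin.val_zero] at this
      omega
  · intro j hj
    beta_reduce
    obtain ⟨h1, h2, h3⟩ := mem_Eset hj
    have hkn := k_le_n hj
    refine Finset.mem_filter.2 ⟨mem_Eset_of (fun m => ?_) ?_ ?_, ?_⟩
    · rcases eq_or_ne m 0 with rfl | hm
      · rw [Function.update_self]; have := val_le_k hj (0 : Fin (n + 2)); omega
      · rw [Function.update_of_ne hm]; exact h1 m
    · have := sum_update_comp (fun (_ : Fin (n + 2)) c => c) j 0 (j 0 + 1)
      omega
    · have := sum_update_comp (fun (m : Fin (n + 2)) c => (m.1 + 1) * c) j 0 (j 0 + 1)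
      simp only [Fin.val_zero] at this
      omega
    · rw [Function.update_self]; omega
  · intro j' hj'
    beta_reduce
    obtain ⟨-, h0⟩ := Finset.mem_filter.1 hj'
    have h0' : j' 0 - 1 + 1 = j' 0 := Nat.succ_pred_eq_of_pos (Nat.pos_of_ne_zero h0)
    rw [Function.update_self, Function.update_idem, h0', Function.update_eq_self]
  · intro j hj
    beta_reduce
    rw [Function.update_self, Function.update_idem, Nat.add_sub_cancel,
      Function.update_eq_self]
  · intro j' hj'
    beta_reduce
    obtain ⟨hjE, h0⟩ := Finset.mem_filter.1 hj'
    have h0' : j' 0 - 1 + 1 = j' 0 := Nat.succ_pred_eq_of_pos (Nat.pos_of_ne_zero h0)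
    rw [term]
    set jn := Function.update j' 0 (j' 0 - 1) with hjn
    -- split off the 0 factor of both power products
    have e2 : (∏ i, (y (i.1 + 1) / ((i.1 + 1).factorial : ℝ)) ^ j' i)
        = (y 1 / (1 : ℝ)) ^ j' 0 * ∏ m ∈ Finset.univ.erase 0,
            (y (m.1 + 1) / ((m.1 + 1).factorial : ℝ)) ^ j' m := by
      rw [← Finset.mul_prod_erase Finset.univ _ (Finset.mem_univ (0 : Fin (n + 2)))]
      norm_num
    have e1 : (∏ i, (y (i.1 + 1) / ((i.1 + 1).factorial : ℝ)) ^ jn i)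
        = (y 1 / (1 : ℝ)) ^ (j' 0 - 1) * ∏ m ∈ Finset.univ.erase 0,
            (y (m.1 + 1) / ((m.1 + 1).factorial : ℝ)) ^ j' m := by
      rw [← Finset.mul_prod_erase Finset.univ _ (Finset.mem_univ (0 : Fin (n + 2)))]
      congr 1
      · rw [hjn, Function.update_self]; norm_num
      · refine Finset.prod_congr rfl fun m hm => ?_
        rw [hjn, Function.update_of_ne (Finset.mem_erase.1 hm).1]
    have hA' : (∏ i, ((jn i).factorial : ℝ)) * (j' 0 : ℝ) = ∏ i, ((j' i).factorial : ℝ) := by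
      have h4 := prod_update_comp (fun (_ : Fin (n + 2)) c => (c.factorial : ℝ)) j' 0 (j' 0 - 1)
      have hfac : (j' 0).factorial = j' 0 * (j' 0 - 1).factorial := by
        conv_lhs => rw [← h0']
        rw [Nat.factorial_succ, h0']
      rw [hfac] at h4
      push_cast at h4
      have hfne : (((j' 0 - 1).factorial : ℝ)) ≠ 0 := Nat.cast_ne_zero.2 (Nat.factorial_ne_zero _)
      apply mul_right_cancel₀ hfne
      calc (∏ i, ((jn i).factorial : ℝ)) * (j' 0 : ℝ) * ((j' 0 - 1).factorial : ℝ)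
          = (∏ i, ((jn i).factorial : ℝ)) * ((j' 0 : ℝ) * ((j' 0 - 1).factorial : ℝ)) := by ring
        _ = (∏ i, ((j' i).factorial : ℝ)) * ((j' 0 - 1).factorial : ℝ) := h4
    have hAne : (∏ i, ((jn i).factorial : ℝ)) ≠ 0 :=
      Finset.prod_ne_zero_iff.2 fun i _ => Nat.cast_ne_zero.2 (Nat.factorial_ne_zero _)
    have hj0ne : (j' 0 : ℝ) ≠ 0 := Nat.cast_ne_zero.2 h0
    rw [e2, e1, ← hA']
    have hpow : (y 1 / (1 : ℝ)) ^ j' 0 = (y 1 / (1 : ℝ)) ^ (j' 0 - 1) * (y 1 / 1) := by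
      conv_lhs => rw [← h0']
      rw [pow_succ]
    rw [hpow]
    field_simp

lemma update2_invol {α : Type*} [DecidableEq α] (j : α → ℕ) {a b : α} (hab : a ≠ b)
    (h : j a ≠ 0) :
    Function.update (Function.update
      (Function.update (Function.update j a (j a - 1)) b (j b + 1)) b
      ((Function.update (Function.update j a (j a - 1)) b (j b + 1)) b - 1)) a
      ((Function.update (Function.update j a (j a - 1)) b (j b + 1)) a + 1) = j := by
  funext m
  rcases eq_or_ne m a with rfl | hma
  · rw [Function.update_self, Function.update_of_ne hab, Function.update_self]
    exact Nat.succ_pred_eq_of_pos (Nat.pos_of_ne_zero h)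
  · rw [Function.update_of_ne hma]
    rcases eq_or_ne m b with rfl | hmb
    · rw [Function.update_self, Function.update_self]
      omega
    · rw [Function.update_of_ne hmb, Function.update_of_ne hmb, Function.update_of_ne hma]

lemma step3 (n k : ℕ) (y : ℕ → ℝ) :
    (∑ j' ∈ Eset (n + 1) k (n + 2) (n + 2), ∑ i : Fin (n + 1),
      ((n.factorial : ℝ) / ∏ m, ((j' m).factorial : ℝ)) * ((i.1 + 2) * (j' i.succ : ℝ))
        * ∏ m, (y (m.1 + 1) / ((m.1 + 1).factorial : ℝ)) ^ j' m)
    = DB n k y := by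
  have hR : DB n k y = ∑ j ∈ Eset n k (n + 2) (n + 2), ∑ i : Fin (n + 1),
      ((n.factorial : ℝ) / ∏ m, ((j m).factorial : ℝ)) *
        ((∏ m ∈ Finset.univ.erase i.castSucc,
            (y (m.1 + 1) / ((m.1 + 1).factorial : ℝ)) ^ j m) *
          ((j i.castSucc : ℝ) *
              (y (i.castSucc.1 + 1) / ((i.castSucc.1 + 1).factorial : ℝ)) ^ (j i.castSucc - 1) *
            ((i.castSucc.1 + 2) * (y (i.castSucc.1 + 2) / ((i.castSucc.1 + 2).factorial : ℝ))))) := by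
    rw [DB]
    refine Finset.sum_congr rfl fun j hj => ?_
    have hlast : j (Fin.last (n + 1)) = 0 := zero_of_ge hj (by rw [Fin.val_last]; omega)
    rw [Fin.sum_univ_castSucc (n := n + 1)]
    rw [hlast]
    push_cast
    rw [zero_mul, zero_mul, mul_zero, add_zero, Finset.mul_sum]
  rw [hR, ← Finset.sum_product', ← Finset.sum_product']
  rw [← Finset.sum_filter_of_ne
      (s := Eset (n + 1) k (n + 2) (n + 2) ×ˢ Finset.univ)
      (p := fun p : (Fin (n + 2) → ℕ) × Fin (n + 1) => p.1 p.2.succ ≠ 0)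
      (fun p _ hp h0 => hp (by rw [h0]; push_cast; ring)),
    ← Finset.sum_filter_of_ne
      (s := Eset n k (n + 2) (n + 2) ×ˢ Finset.univ)
      (p := fun p : (Fin (n + 2) → ℕ) × Fin (n + 1) => p.1 p.2.castSucc ≠ 0)
      (fun p _ hp h0 => hp (by rw [h0]; push_cast; ring))]
  refine Finset.sum_bij'
    (fun p _ => (Function.update (Function.update p.1 p.2.succ (p.1 p.2.succ - 1))
        p.2.castSucc (p.1 p.2.castSucc + 1), p.2))
    (fun p _ => (Function.update (Function.update p.1 p.2.castSucc (p.1 p.2.castSucc - 1))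
        p.2.succ (p.1 p.2.succ + 1), p.2)) ?_ ?_ ?_ ?_ ?_
  · rintro ⟨j', i⟩ hp
    obtain ⟨hmem, hcond⟩ := Finset.mem_filter.1 hp
    obtain ⟨hjE, -⟩ := Finset.mem_product.1 hmem
    dsimp only at hcond hjE
    obtain ⟨h1, h2, h3⟩ := mem_Eset hjE
    have hkn := k_le_n hjE
    have hab : i.succ ≠ i.castSucc := (Fin.castSucc_lt_succ (i := i)).ne'
    have hpair := pair_le_sum j' hab
    have hmE : Function.update (Function.update j' i.succ (j' i.succ - 1)) i.castSucc
        (j' i.castSucc + 1) ∈ Eset n k (n + 2) (n + 2) := by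
      refine mem_Eset_of (fun m => ?_) ?_ ?_
      · rcases eq_or_ne m i.castSucc with rfl | hmb
        · rw [Function.update_self]; omega
        · rw [Function.update_of_ne hmb]
          rcases eq_or_ne m i.succ with rfl | hma
          · rw [Function.update_self]; have := h1 i.succ; omega
          · rw [Function.update_of_ne hma]; exact h1 m
      · have := sum_update2 (fun (_ : Fin (n + 2)) c => c) j' hab
          (j' i.succ - 1) (j' i.castSucc + 1)
        omega
      · have := sum_update2 (fun (m : Fin (n + 2)) c => (m.1 + 1) * c) j' hab
          (j' i.succ - 1) (j' i.castSucc + 1)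
        simp only [Fin.val_succ, Fin.coe_castSucc] at this ⊢
        have hc : j' i.succ - 1 + 1 = j' i.succ :=
          Nat.succ_pred_eq_of_pos (Nat.pos_of_ne_zero hcond)
        have e1 : (i.1 + 1 + 1) * (j' i.succ - 1) + (i.1 + 1 + 1)
            = (i.1 + 1 + 1) * j' i.succ := by
          conv_rhs => rw [← hc]
          ring
        have e2 : (i.1 + 1) * (j' i.castSucc + 1)
            = (i.1 + 1) * j' i.castSucc + (i.1 + 1) := by ring
        omega
    refine Finset.mem_filter.2 ⟨Finset.mem_product.2 ⟨hmE, Finset.mem_univ _⟩, ?_⟩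
    show Function.update (Function.update j' i.succ (j' i.succ - 1)) i.castSucc
        (j' i.castSucc + 1) i.castSucc ≠ 0
    rw [Function.update_self]
    simp
  · rintro ⟨j, i⟩ hp
    obtain ⟨hmem, hcond⟩ := Finset.mem_filter.1 hp
    obtain ⟨hjE, -⟩ := Finset.mem_product.1 hmem
    dsimp only at hcond hjE
    obtain ⟨h1, h2, h3⟩ := mem_Eset hjE
    have hkn := k_le_n hjE
    have hab : i.castSucc ≠ i.succ := (Fin.castSucc_lt_succ (i := i)).ne
    have hvk := val_le_k hjE i.succ
    have hmE : Function.update (Function.update j i.castSucc (j i.castSucc - 1)) i.succ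
        (j i.succ + 1) ∈ Eset (n + 1) k (n + 2) (n + 2) := by
      refine mem_Eset_of (fun m => ?_) ?_ ?_
      · rcases eq_or_ne m i.succ with rfl | hma
        · rw [Function.update_self]; omega
        · rw [Function.update_of_ne hma]
          rcases eq_or_ne m i.castSucc with rfl | hmb
          · rw [Function.update_self]; have := h1 i.castSucc; omega
          · rw [Function.update_of_ne hmb]; exact h1 m
      · have := sum_update2 (fun (_ : Fin (n + 2)) c => c) j hab
          (j i.castSucc - 1) (j i.succ + 1)
        omega
      · have := sum_update2 (fun (m : Fin (n + 2)) c => (m.1 + 1) * c) j hab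
          (j i.castSucc - 1) (j i.succ + 1)
        simp only [Fin.val_succ, Fin.coe_castSucc] at this ⊢
        have hc : j i.castSucc - 1 + 1 = j i.castSucc :=
          Nat.succ_pred_eq_of_pos (Nat.pos_of_ne_zero hcond)
        have e1 : (i.1 + 1) * (j i.castSucc - 1) + (i.1 + 1)
            = (i.1 + 1) * j i.castSucc := by
          conv_rhs => rw [← hc]
          ring
        have e2 : (i.1 + 1 + 1) * (j i.succ + 1)
            = (i.1 + 1 + 1) * j i.succ + (i.1 + 1 + 1) := by ring
        omega
    refine Finset.mem_filter.2 ⟨Finset.mem_product.2 ⟨hmE, Finset.mem_univ _⟩, ?_⟩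
    show Function.update (Function.update j i.castSucc (j i.castSucc - 1)) i.succ
        (j i.succ + 1) i.succ ≠ 0
    rw [Function.update_self]
    simp
  · rintro ⟨j', i⟩ hp
    obtain ⟨-, hcond⟩ := Finset.mem_filter.1 hp
    have hab : i.succ ≠ i.castSucc := (Fin.castSucc_lt_succ (i := i)).ne'
    dsimp only at hcond
    show (Function.update _ _ _, i) = (j', i)
    rw [Prod.mk.injEq]
    exact ⟨update2_invol j' hab hcond, rfl⟩
  · rintro ⟨j, i⟩ hp
    obtain ⟨-, hcond⟩ := Finset.mem_filter.1 hp
    have hab : i.castSucc ≠ i.succ := (Fin.castSucc_lt_succ (i := i)).ne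
    dsimp only at hcond
    show (Function.update _ _ _, i) = (j, i)
    rw [Prod.mk.injEq]
    exact ⟨update2_invol j hab hcond, rfl⟩
  · rintro ⟨j', i⟩ hp
    obtain ⟨hmem, hcond⟩ := Finset.mem_filter.1 hp
    obtain ⟨hjE, -⟩ := Finset.mem_product.1 hmem
    dsimp only at hcond hjE
    obtain ⟨h1, h2, h3⟩ := mem_Eset hjE
    dsimp only
    have hab : i.succ ≠ i.castSucc := (Fin.castSucc_lt_succ (i := i)).ne'
    set jN := Function.update (Function.update j' i.succ (j' i.succ - 1)) i.castSucc
      (j' i.castSucc + 1) with hjNdef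
    have hvb : jN i.castSucc = j' i.castSucc + 1 := by
      rw [hjNdef, Function.update_self]
    have hva : jN i.succ = j' i.succ - 1 := by
      rw [hjNdef, Function.update_of_ne hab, Function.update_self]
    have hme : ∀ m, m ≠ i.succ → m ≠ i.castSucc → jN m = j' m := fun m hma hmb => by
      rw [hjNdef, Function.update_of_ne hmb, Function.update_of_ne hma]
    have haInb : i.succ ∈ Finset.univ.erase i.castSucc :=
      Finset.mem_erase.2 ⟨hab, Finset.mem_univ _⟩
    -- split the power products
    have hQ2 : (∏ m, (y (m.1 + 1) / ((m.1 + 1).factorial : ℝ)) ^ j' m)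
        = (y (i.castSucc.1 + 1) / ((i.castSucc.1 + 1).factorial : ℝ)) ^ j' i.castSucc *
          ((y (i.succ.1 + 1) / ((i.succ.1 + 1).factorial : ℝ)) ^ j' i.succ *
            ∏ m ∈ (Finset.univ.erase i.castSucc).erase i.succ,
              (y (m.1 + 1) / ((m.1 + 1).factorial : ℝ)) ^ j' m) := by
      rw [← Finset.mul_prod_erase Finset.univ _ (Finset.mem_univ i.castSucc),
        ← Finset.mul_prod_erase (Finset.univ.erase i.castSucc) _ haInb]
    have hQ1 : (∏ m ∈ Finset.univ.erase i.castSucc,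
          (y (m.1 + 1) / ((m.1 + 1).factorial : ℝ)) ^ jN m)
        = (y (i.succ.1 + 1) / ((i.succ.1 + 1).factorial : ℝ)) ^ (j' i.succ - 1) *
            ∏ m ∈ (Finset.univ.erase i.castSucc).erase i.succ,
              (y (m.1 + 1) / ((m.1 + 1).factorial : ℝ)) ^ j' m := by
      rw [← Finset.mul_prod_erase (Finset.univ.erase i.castSucc) _ haInb, hva]
      congr 1
      refine Finset.prod_congr rfl fun m hm => ?_
      obtain ⟨hma, hmb⟩ := Finset.mem_erase.1 hm
      rw [hme m hma (Finset.mem_erase.1 hmb).1]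
    -- factorial identity
    have hfa : ((j' i.succ).factorial : ℝ)
        = (j' i.succ : ℝ) * ((j' i.succ - 1).factorial : ℝ) := by
      have h' : j' i.succ - 1 + 1 = j' i.succ := Nat.succ_pred_eq_of_pos (Nat.pos_of_ne_zero hcond)
      have : (j' i.succ).factorial = j' i.succ * (j' i.succ - 1).factorial := by
        conv_lhs => rw [← h']
        rw [Nat.factorial_succ, h']
      rw [this]; push_cast; ring
    have hfb : ((j' i.castSucc + 1).factorial : ℝ)
        = ((j' i.castSucc : ℝ) + 1) * ((j' i.castSucc).factorial : ℝ) := by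
      rw [Nat.factorial_succ]; push_cast; ring
    have hF := prod_update2 (fun (_ : Fin (n + 2)) c => ((c.factorial : ℕ) : ℝ)) j' hab
      (j' i.succ - 1) (j' i.castSucc + 1)
    have hkey : (∏ m, ((jN m).factorial : ℝ)) * (j' i.succ : ℝ)
        = (∏ m, ((j' m).factorial : ℝ)) * ((j' i.castSucc : ℝ) + 1) := by
      have hne : ((j' i.succ - 1).factorial : ℝ) * ((j' i.castSucc).factorial : ℝ) ≠ 0 :=
        mul_ne_zero (Nat.cast_ne_zero.2 (Nat.factorial_ne_zero _))
          (Nat.cast_ne_zero.2 (Nat.factorial_ne_zero _))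
      apply mul_right_cancel₀ hne
      calc (∏ m, ((jN m).factorial : ℝ)) * (j' i.succ : ℝ) *
            (((j' i.succ - 1).factorial : ℝ) * ((j' i.castSucc).factorial : ℝ))
          = (∏ m, ((jN m).factorial : ℝ)) *
              (((j' i.succ : ℝ) * ((j' i.succ - 1).factorial : ℝ)) *
                ((j' i.castSucc).factorial : ℝ)) := by ring
        _ = (∏ m, ((jN m).factorial : ℝ)) *
              (((j' i.succ).factorial : ℝ) * ((j' i.castSucc).factorial : ℝ)) := by rw [hfa]
        _ = (∏ m, ((j' m).factorial : ℝ)) *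
              (((j' i.succ - 1).factorial : ℝ) * ((j' i.castSucc + 1).factorial : ℝ)) := hF
        _ = (∏ m, ((j' m).factorial : ℝ)) * ((j' i.castSucc : ℝ) + 1) *
              (((j' i.succ - 1).factorial : ℝ) * ((j' i.castSucc).factorial : ℝ)) := by
            rw [hfb]; ring
    have hAne : (∏ m, ((jN m).factorial : ℝ)) ≠ 0 :=
      Finset.prod_ne_zero_iff.2 fun m _ => Nat.cast_ne_zero.2 (Nat.factorial_ne_zero _)
    have hA'ne : (∏ m, ((j' m).factorial : ℝ)) ≠ 0 :=
      Finset.prod_ne_zero_iff.2 fun m _ => Nat.cast_ne_zero.2 (Nat.factorial_ne_zero _)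
    -- exponent adjustment
    have hpow : (y (i.succ.1 + 1) / ((i.succ.1 + 1).factorial : ℝ)) ^ j' i.succ
        = (y (i.succ.1 + 1) / ((i.succ.1 + 1).factorial : ℝ)) ^ (j' i.succ - 1) *
          (y (i.succ.1 + 1) / ((i.succ.1 + 1).factorial : ℝ)) := by
      conv_lhs => rw [← Nat.succ_pred_eq_of_pos (Nat.pos_of_ne_zero hcond)]
      rw [pow_succ, Nat.pred_eq_sub_one]
    have hcoef : (n.factorial : ℝ) / (∏ m, ((j' m).factorial : ℝ)) * (j' i.succ : ℝ)
        = (n.factorial : ℝ) / (∏ m, ((jN m).factorial : ℝ)) * ((j' i.castSucc : ℝ) + 1) := by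
      rw [div_mul_eq_mul_div, div_mul_eq_mul_div, div_eq_div_iff hA'ne hAne]
      linear_combination (n.factorial : ℝ) * hkey
    rw [hQ2, hQ1, hvb, hpow]
    simp only [Fin.coe_castSucc, Fin.val_succ, Nat.add_sub_cancel]
    push_cast
    linear_combination (((i.1 : ℝ) + 2) *
      (y (i.1 + 1 + 1) / ((i.1 + 1 + 1).factorial : ℝ)) ^ (j' i.succ - 1) *
      (y (i.1 + 1 + 1) / ((i.1 + 1 + 1).factorial : ℝ)) *
      (y (i.1 + 1) / ((i.1 + 1).factorial : ℝ)) ^ (j' i.castSucc) *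
      (∏ m ∈ (Finset.univ.erase i.castSucc).erase i.succ,
        (y (m.1 + 1) / ((m.1 + 1).factorial : ℝ)) ^ j' m)) * hcoef

theorem CI (n k : ℕ) (hk : 1 ≤ k) (y : ℕ → ℝ) :
    Bv (n + 1) k (n + 2) (n + 2) y = DB n k y + y 1 * Bv n (k - 1) (n + 2) (n + 2) y := by
  have step1 : Bv (n + 1) k (n + 2) (n + 2) y
      = (∑ j' ∈ Eset (n + 1) k (n + 2) (n + 2),
          ((n.factorial : ℝ) / ∏ m, ((j' m).factorial : ℝ)) * (j' 0 : ℝ)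
            * ∏ m, (y (m.1 + 1) / ((m.1 + 1).factorial : ℝ)) ^ j' m)
        + ∑ j' ∈ Eset (n + 1) k (n + 2) (n + 2), ∑ i : Fin (n + 1),
            ((n.factorial : ℝ) / ∏ m, ((j' m).factorial : ℝ)) * ((i.1 + 2) * (j' i.succ : ℝ))
              * ∏ m, (y (m.1 + 1) / ((m.1 + 1).factorial : ℝ)) ^ j' m := by
    rw [Bv, ← Finset.sum_add_distrib]
    refine Finset.sum_congr rfl fun j' hj' => ?_
    obtain ⟨-, -, h3⟩ := mem_Eset hj'
    have hsplit : ∑ i : Fin (n + 2), (i.1 + 1) * j' i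
        = j' 0 + ∑ i : Fin (n + 1), (i.1 + 2) * j' i.succ := by
      rw [Fin.sum_univ_succ]
      simp only [Fin.val_succ, Fin.val_zero]
      ring
    have hw : j' 0 + ∑ i : Fin (n + 1), (i.1 + 2) * j' i.succ = n + 1 := by
      rw [← hsplit]; exact h3
    have hwR : (j' 0 : ℝ) + ∑ i : Fin (n + 1), ((i.1 : ℝ) + 2) * (j' i.succ : ℝ)
        = (n : ℝ) + 1 := by exact_mod_cast hw
    have hS : ((n.factorial : ℝ) / ∏ m, ((j' m).factorial : ℝ)) *
          (∑ i : Fin (n + 1), ((i.1 : ℝ) + 2) * (j' i.succ : ℝ)) *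
          (∏ m, (y (m.1 + 1) / ((m.1 + 1).factorial : ℝ)) ^ j' m)
        = ∑ i : Fin (n + 1),
            ((n.factorial : ℝ) / ∏ m, ((j' m).factorial : ℝ)) * (((i.1 : ℝ) + 2) * (j' i.succ : ℝ))
              * ∏ m, (y (m.1 + 1) / ((m.1 + 1).factorial : ℝ)) ^ j' m := by
      rw [Finset.mul_sum, Finset.sum_mul]
    rw [term, Nat.factorial_succ]
    push_cast
    rw [← hS, ← hwR]
    ring
  rw [step1, step2 n k hk y, step3 n k y]
  ring

lemma hasDerivAt_term (n k : ℕ) {g : ℝ → ℝ} (hg : ContDiff ℝ (n + 1 : ℕ) g) (x : ℝ)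
    {j : Fin (n + 2) → ℕ} (hj : j ∈ Eset n k (n + 2) (n + 2)) :
    HasDerivAt (fun t => term n (n + 2) (fun i => iteratedDeriv i g t) j)
      (((n.factorial : ℝ) / ∏ m, ((j m).factorial : ℝ)) *
        ∑ i : Fin (n + 2),
          (∏ m ∈ Finset.univ.erase i,
            (iteratedDeriv (m.1 + 1) g x / ((m.1 + 1).factorial : ℝ)) ^ j m) *
            ((j i : ℝ) * (iteratedDeriv (i.1 + 1) g x / ((i.1 + 1).factorial : ℝ)) ^ (j i - 1) *
              ((i.1 + 2) * (iteratedDeriv (i.1 + 2) g x / ((i.1 + 2).factorial : ℝ))))) x := by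
  have hf : ∀ i ∈ (Finset.univ : Finset (Fin (n + 2))),
      HasDerivAt (fun t => (iteratedDeriv (i.1 + 1) g t / ((i.1 + 1).factorial : ℝ)) ^ j i)
        ((j i : ℝ) * (iteratedDeriv (i.1 + 1) g x / ((i.1 + 1).factorial : ℝ)) ^ (j i - 1) *
          ((i.1 + 2) * (iteratedDeriv (i.1 + 2) g x / ((i.1 + 2).factorial : ℝ)))) x := by
    intro i _
    by_cases h0 : j i = 0
    · simp only [h0, pow_zero, Nat.cast_zero, zero_mul]
      exact hasDerivAt_const x 1
    · have hle : i.1 + 1 ≤ n := by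
        have := weight_le hj i
        have : 1 ≤ j i := Nat.pos_of_ne_zero h0
        nlinarith [weight_le hj i]
      have hd : HasDerivAt (fun t => iteratedDeriv (i.1 + 1) g t) (iteratedDeriv (i.1 + 2) g x)
          x := by
        have hdiff : Differentiable ℝ (iteratedDeriv (i.1 + 1) g) :=
          hg.differentiable_iteratedDeriv (i.1 + 1) (by exact_mod_cast Nat.lt_succ_of_le hle)
        have h := (hdiff.differentiableAt (x := x)).hasDerivAt
        rwa [show deriv (iteratedDeriv (i.1 + 1) g) x = iteratedDeriv (i.1 + 2) g x from
          (congrFun (iteratedDeriv_succ (n := i.1 + 1)).symm x)] at h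
      have hdd : HasDerivAt (fun t => (iteratedDeriv (i.1 + 1) g t / ((i.1 + 1).factorial : ℝ)) ^ j i) _ x :=
          (hd.div_const ((i.1 + 1).factorial : ℝ)).pow (j i)
      convert hdd using 1
      have hfac : ((i.1 + 2).factorial : ℝ) = ((i.1 : ℝ) + 2) * ((i.1 + 1).factorial : ℝ) := by
        rw [show i.1 + 2 = i.1 + 1 + 1 from rfl, Nat.factorial_succ]
        push_cast
        ring
      have hne : ((i.1 + 1).factorial : ℝ) ≠ 0 := Nat.cast_ne_zero.2 (Nat.factorial_ne_zero _)
      have h2 : ((i.1 : ℝ) + 2) * (iteratedDeriv (i.1 + 2) g x / ((i.1 + 2).factorial : ℝ))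
          = iteratedDeriv (i.1 + 2) g x / ((i.1 + 1).factorial : ℝ) := by
        rw [hfac]
        field_simp
      rw [← h2]
  have hprod := HasDerivAt.fun_finsetProd hf
  have := hprod.const_mul ((n.factorial : ℝ) / ∏ m, ((j m).factorial : ℝ))
  simp only [smul_eq_mul] at this
  exact this

lemma hasDerivAt_Bv (n k : ℕ) {g : ℝ → ℝ} (hg : ContDiff ℝ (n + 1 : ℕ) g) (x : ℝ) :
    HasDerivAt (fun t => Bv n k (n + 2) (n + 2) (fun i => iteratedDeriv i g t))
      (DB n k (fun i => iteratedDeriv i g x)) x :=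
  HasDerivAt.fun_sum (fun j hj => hasDerivAt_term n k hg x hj)

lemma DB_zero_of_gt {n k : ℕ} (h : n < k) (y : ℕ → ℝ) : DB n k y = 0 :=
  Finset.sum_eq_zero fun j hj => absurd (k_le_n hj) (by omega)

lemma bellPoly_one_one (y : ℕ → ℝ) : bellPoly 1 1 y = y 1 := by
  rw [bellPoly_eq_Bv']
  have hE : Eset 1 1 1 2 = {fun _ => 1} := by decide
  rw [Bv, hE, Finset.sum_singleton, term]
  norm_num [Fin.prod_univ_one, Nat.factorial]

end FdB

theorem faa_di_bruno_univariate (n : ℕ) (hn : 1 ≤ n) (f g : ℝ → ℝ)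
    (hf : ContDiff ℝ n f) (hg : ContDiff ℝ n g) (x : ℝ) :
    iteratedDeriv n (f ∘ g) x =
      ∑ k ∈ Finset.Icc 1 n,
        iteratedDeriv k f (g x) * bellPoly n k (fun i => iteratedDeriv i g x) := by
  induction n, hn using Nat.le_induction generalizing f g x with
  | base =>
    have hfd : DifferentiableAt ℝ f (g x) :=
      (hf.differentiable (by simp)).differentiableAt
    have hgd : DifferentiableAt ℝ g x :=
      (hg.differentiable (by simp)).differentiableAt
    rw [iteratedDeriv_one, deriv_comp x hfd hgd, Finset.Icc_self, Finset.sum_singleton,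
      FdB.bellPoly_one_one, iteratedDeriv_one, iteratedDeriv_one]
  | succ n hn ih =>
    have hfn : ContDiff ℝ (n : ℕ) f := hf.of_le (by exact_mod_cast Nat.le_succ n)
    have hgn : ContDiff ℝ (n : ℕ) g := hg.of_le (by exact_mod_cast Nat.le_succ n)
    have hIH : iteratedDeriv n (f ∘ g) = fun t => ∑ k ∈ Finset.Icc 1 n,
        iteratedDeriv k f (g t) * FdB.Bv n k (n + 2) (n + 2) (fun i => iteratedDeriv i g t) := by
      funext t
      rw [ih f g hfn hgn t]
      exact Finset.sum_congr rfl fun k _ => by rw [FdB.bellPoly_eq_Bv]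
    rw [iteratedDeriv_succ, hIH]
    -- derivative of the sum
    have hgx : HasDerivAt g (deriv g x) x :=
      ((hg.differentiable (by simp)).differentiableAt).hasDerivAt
    have hS : HasDerivAt (fun t => ∑ k ∈ Finset.Icc 1 n,
        iteratedDeriv k f (g t) * FdB.Bv n k (n + 2) (n + 2) (fun i => iteratedDeriv i g t))
        (∑ k ∈ Finset.Icc 1 n,
          (iteratedDeriv (k + 1) f (g x) * deriv g x *
              FdB.Bv n k (n + 2) (n + 2) (fun i => iteratedDeriv i g x) +
            iteratedDeriv k f (g x) * FdB.DB n k (fun i => iteratedDeriv i g x))) x := by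
      refine HasDerivAt.fun_sum fun k hk => ?_
      obtain ⟨hk1, hk2⟩ := Finset.mem_Icc.1 hk
      have hfk : HasDerivAt (iteratedDeriv k f) (iteratedDeriv (k + 1) f (g x)) (g x) := by
        have hdiff : Differentiable ℝ (iteratedDeriv k f) :=
          hf.differentiable_iteratedDeriv k (by exact_mod_cast Nat.lt_succ_of_le hk2)
        have h := (hdiff.differentiableAt (x := g x)).hasDerivAt
        rwa [show deriv (iteratedDeriv k f) (g x) = iteratedDeriv (k + 1) f (g x) from
          (congrFun (iteratedDeriv_succ (n := k)).symm (g x))] at h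
      exact (hfk.comp x hgx).mul (FdB.hasDerivAt_Bv n k hg x)
    rw [hS.deriv]
    -- now pure algebra with CI
    set Y : ℕ → ℝ := fun i => iteratedDeriv i g x with hY
    have hY1 : Y 1 = deriv g x := by
      show iteratedDeriv 1 g x = deriv g x
      rw [iteratedDeriv_one]
    have hpad : ∀ k, bellPoly (n + 1) k Y = FdB.Bv (n + 1) k (n + 2) (n + 2) Y := fun k =>
      (FdB.bellPoly_eq_Bv (n + 1) k Y).trans
        (FdB.Bv_pad (by omega) (by omega) (by omega) (by omega) Y)
    have hsplit : ∀ k ∈ Finset.Icc 1 (n + 1),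
        iteratedDeriv k f (g x) * bellPoly (n + 1) k Y
          = iteratedDeriv k f (g x) * FdB.DB n k Y +
            iteratedDeriv k f (g x) * (deriv g x * FdB.Bv n (k - 1) (n + 2) (n + 2) Y) := by
      intro k hk
      rw [hpad k, FdB.CI n k (Finset.mem_Icc.1 hk).1 Y, hY1]
      ring
    rw [Finset.sum_congr rfl hsplit, Finset.sum_add_distrib, Finset.sum_add_distrib]
    conv_lhs => rw [add_comm]
    congr 1
    · -- ∑_{Icc 1 n} first-part = ∑_{Icc 1 (n+1)} DB-part
      rw [Finset.sum_Icc_succ_top (by omega : 1 ≤ n + 1), FdB.DB_zero_of_gt (by omega) Y,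
        mul_zero, add_zero]
    · -- ∑_{Icc 1 n} A-part = ∑_{Icc 1 (n+1)} shifted part
      rw [show ∑ k ∈ Finset.Icc 1 (n + 1), iteratedDeriv k f (g x) *
            (deriv g x * FdB.Bv n (k - 1) (n + 2) (n + 2) Y)
          = ∑ k ∈ Finset.Icc 2 (n + 1), iteratedDeriv k f (g x) *
            (deriv g x * FdB.Bv n (k - 1) (n + 2) (n + 2) Y) from
        (Finset.sum_subset (Finset.Icc_subset_Icc_left (by omega)) fun k hk1 hk2 => by
          have hk1' := Finset.mem_Icc.1 hk1
          have : k = 1 := by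
            by_contra h
            exact hk2 (Finset.mem_Icc.2 ⟨by omega, hk1'.2⟩)
          rw [this]
          simp [FdB.Bv_zero_eq_zero hn Y]).symm]
      refine Finset.sum_nbij' (fun k => k + 1) (fun k => k - 1) ?_ ?_ ?_ ?_ ?_
      · intro k hk
        beta_reduce
        have := Finset.mem_Icc.1 hk
        exact Finset.mem_Icc.2 (by omega)
      · intro k hk
        beta_reduce
        have := Finset.mem_Icc.1 hk
        exact Finset.mem_Icc.2 (by omega)
      · intro k hk
        have := Finset.mem_Icc.1 hk
        omega
      · intro k hk
        have := Finset.mem_Icc.1 hk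
        omega
      · intro k hk
        rw [Nat.add_sub_cancel]
        ring
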